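/- For every n ∈ ℤ, the following operator identity holds on the ring of symmetric functions in superspace: Σ_{r,s≥0} (−1)^{r+s} θ_{n+r+s+1} ∘ e_r^⊥ ∘ ∂_{ẽ_s} = Σ_{r≥0} (−1)^r θ_{n+r+1} ∘ ∂_{ẽ₀} ∘ e_r^⊥. Consequently, the even type-I Bernstein operator B_n^{(0)} = ∂_{ẽ₀} ∘ B_n^{(1)} admits the explicit expression B_n^{(0)} = Σ_{r≥0} (−1)^r h_{n+r} ∘ e_r^⊥ − Σ_{r,s≥0} (−1)^{r+s} θ_{n+r+s+1} ∘ e_r^⊥ ∘ ∂_{ẽ_s}. -/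

import Mathlib

/-!
Common setup: the ring of symmetric functions in superspace
`𝒜 = ℚ[x₁,x₂,…] ⊗ ⋀[θ₁,θ₂,…]`, axiomatised as a structure `SSF` on a
ℚ-algebra `A`, together with superpartitions and the various derived
operators (Bernstein operators in superspace of the four types, etc.).

Conventions:
* `x k`, `θ k` are the (normalized) power sums; they are meaningful for
  `k ≥ 1` and we set `x 0 = θ 0 = 0`.
* All "locally finite" infinite sums of operators `∑_{r ≥ 0}` are rendered
  as finite sums `∑ r ∈ Finset.range (bnd f)` where `bnd f` is a bound
  beyond which all relevant operators annihilate `f`.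
-/

open scoped BigOperators Classical

noncomputable section

/-- A superpartition `Λ = (Λᵃ; Λˢ)`: `Λᵃ` is a strictly decreasing list of
nonnegative integers (the fermionic parts) and `Λˢ` is a weakly decreasing
list of positive integers (the bosonic parts). -/
structure SuperPartition where
  a : List ℕ
  s : List ℕ
  ha : a.Chain' (· > ·)
  hs : s.Chain' (· ≥ ·)
  hs0 : ∀ p ∈ s, 0 < p

namespace SuperPartition

/-- the fermionic degree `m(Λ)` -/
def fdeg (Λ : SuperPartition) : ℕ := Λ.a.length

/-- the number of parts `N` -/
def len (Λ : SuperPartition) : ℕ := Λ.a.length + Λ.s.length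

/-- the total degree `|Λ|` -/
def deg (Λ : SuperPartition) : ℕ := Λ.a.sum + Λ.s.sum

/-- `Λ*`: the weakly decreasing rearrangement of all the parts -/
def star (Λ : SuperPartition) : List ℕ :=
  (Multiset.sort ((Λ.a ++ Λ.s : List ℕ) : Multiset ℕ) (· ≤ ·)).reverse

/-- `Λ⊛`: the weakly decreasing rearrangement of the parts of `Λˢ`
together with the parts of `Λᵃ` each increased by one -/
def circ (Λ : SuperPartition) : List ℕ :=
  (Multiset.sort ((Λ.a.map (· + 1) ++ Λ.s : List ℕ) : Multiset ℕ) (· ≤ ·)).reverse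

/-- `Λᵢ*` (0-indexed; equal to `0` beyond the length) -/
def starPart (Λ : SuperPartition) (i : ℕ) : ℕ := Λ.star.getD i 0

/-- `Λᵢ⊛` (0-indexed; equal to `0` beyond the length) -/
def circPart (Λ : SuperPartition) (i : ℕ) : ℕ := Λ.circ.getD i 0

/-- `εᵢ(Λ) = Λᵢ⊛ − Λᵢ*` (0-indexed) -/
def eps (Λ : SuperPartition) (i : ℕ) : ℕ := Λ.circPart i - Λ.starPart i

/-- the (0-indexed) rows of the diagram of `Λ` that end with a circle,
listed from top to bottom -/
def circleRows (Λ : SuperPartition) : List ℕ :=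
  (List.range Λ.len).filter (fun i => decide (Λ.circPart i = Λ.starPart i + 1))

end SuperPartition

/-- the `i`-th part (0-indexed) of the conjugate of the partition `L` -/
def conjPart (L : List ℕ) (i : ℕ) : ℕ := (L.filter (fun p => decide (i < p))).length

/-- `Λc` is the conjugate `Λ'` of the superpartition `Λ` (the diagram of
`Λc` is the transpose of the diagram of `Λ`, i.e. both `Λ*` and `Λ⊛` get
conjugated). -/
def SuperPartition.IsConj (Λ Λc : SuperPartition) : Prop :=
  (∀ i, Λc.starPart i = conjPart Λ.star i) ∧ (∀ i, Λc.circPart i = conjPart Λ.circ i)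

/-- The ring `𝒜 = ℚ[x₁,x₂,…] ⊗ ⋀[θ₁,θ₂,…]` of symmetric functions in
superspace, together with its standard structure:  power sums `x`, `θ`,
the elementary and homogeneous bases `e`, `ẽ`, `h`, `h̃` (defined through
their generating series, here encoded by the equivalent recurrences
obtained by comparing coefficients), the derivatives `∂_{x_k}`, `∂_{θ_k}`,
`∂_{ẽ_m}`, the adjoint (`⊥`) map, the scalar product, the automorphisms
`ω` and `ρ` (and the adjoints `ρ^⊥`, `φ^⊥` of `ρ` and `φ = ω ∘ ρ`), and
the four families of Schur functions in superspace. -/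
structure SSF (A : Type*) [Ring A] [Algebra ℚ A] where
  /-- the even power sums `x_k = p_k/k` (for `k ≥ 1`) -/
  x : ℕ → A
  /-- the odd power sums `θ_k` (for `k ≥ 1`) -/
  θ : ℕ → A
  x0 : x 0 = 0
  θ0 : θ 0 = 0
  x_central : ∀ k a, x k * a = a * x k
  θ_anticomm : ∀ j k, θ j * θ k = - (θ k * θ j)
  /-- `A` is free over `ℚ` with basis the supermonomials in the `x`'s and `θ`'s -/
  bas : Module.Basis ((ℕ →₀ ℕ) × Finset ℕ) ℚ A
  bas_eq : ∀ (d : ℕ →₀ ℕ) (T : Finset ℕ), bas (d, T) =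
    ((d.support.sort (· ≤ ·)).map (fun k => x (k+1) ^ d k)).prod *
      ((T.sort (· ≤ ·)).map (fun k => θ (k+1))).prod
  /-- the complete homogeneous functions `h_k`, defined by
  `∑ z^k h_k = exp (∑_{k>0} z^k x_k)` -/
  h : ℕ → A
  /-- the elementary functions `e_k`, defined by
  `∑ z^k e_k = exp (−∑_{k>0} (−z)^k x_k)` -/
  e : ℕ → A
  /-- the odd complete homogeneous functions `h̃_k` -/
  ht : ℕ → A
  /-- the odd elementary functions `ẽ_k` -/
  et : ℕ → A
  h_zero : h 0 = 1
  h_rec : ∀ n : ℕ, ((n : ℚ) + 1) • h (n+1) =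
    ∑ k ∈ Finset.range (n+1), ((k : ℚ) + 1) • (x (k+1) * h (n - k))
  e_zero : e 0 = 1
  e_rec : ∀ n : ℕ, ((n : ℚ) + 1) • e (n+1) =
    ∑ k ∈ Finset.range (n+1), (((-1 : ℚ))^k * ((k : ℚ) + 1)) • (x (k+1) * e (n - k))
  ht_eq : ∀ n : ℕ, ht n = ∑ j ∈ Finset.range (n+1), θ (j+1) * h (n - j)
  et_eq : ∀ n : ℕ, et n = ∑ j ∈ Finset.range (n+1), ((-1 : ℚ))^j • (θ (j+1) * e (n - j))
  /-- the parity (grading) involution, `σ(x_k) = x_k`, `σ(θ_k) = −θ_k` -/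
  σ : A →ₐ[ℚ] A
  σ_x : ∀ k, σ (x k) = x k
  σ_θ : ∀ k, σ (θ k) = - θ k
  /-- the derivative `∂_{x_k}` -/
  Dx : ℕ → Module.End ℚ A
  /-- the (odd) derivative `∂_{θ_k}` -/
  Dθ : ℕ → Module.End ℚ A
  Dx_leibniz : ∀ k a b, Dx k (a * b) = Dx k a * b + a * Dx k b
  Dθ_leibniz : ∀ k a b, Dθ k (a * b) = Dθ k a * b + σ a * Dθ k b
  Dx_x : ∀ k j, 1 ≤ k → Dx k (x j) = if j = k then 1 else 0
  Dx_θ : ∀ k j, Dx k (θ j) = 0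
  Dθ_x : ∀ k j, Dθ k (x j) = 0
  Dθ_θ : ∀ k j, 1 ≤ k → Dθ k (θ j) = if j = k then 1 else 0
  /-- the (odd) derivative `∂_{ẽ_m}` with respect to `ẽ_m` in the free
  presentation `𝒜 = ℚ[e₁,e₂,…] ⊗ ⋀[ẽ₀,ẽ₁,…]` -/
  De : ℕ → Module.End ℚ A
  De_leibniz : ∀ m a b, De m (a * b) = De m a * b + σ a * De m b
  De_e : ∀ m n, De m (e n) = 0
  De_et : ∀ m n, De m (et n) = if n = m then 1 else 0
  /-- the adjoint map `f ↦ f^⊥`, given by the substitutions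
  `x_k ↦ (1/k) ∂_{x_k}` and `θ_k ↦ ∂_{θ_k}` (it is linear and reverses
  products) -/
  perp : A →ₗ[ℚ] Module.End ℚ A
  perp_one : perp 1 = 1
  perp_mul : ∀ a b, perp (a * b) = perp b * perp a
  perp_x : ∀ k, 1 ≤ k → perp (x k) = ((k : ℚ))⁻¹ • Dx k
  perp_θ : ∀ k, 1 ≤ k → perp (θ k) = Dθ k
  /-- the scalar product `⟨·,·⟩` on `𝒜`; on the power-sum basis it is
  `⟨𝒳_Λ, 𝒳_Ω⟩ = δ_{ΛΩ} (−1)^{m(m−1)/2} |Aut(Λˢ)| / ∏ᵢ Λˢᵢ`, which on the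
  (increasingly sorted) supermonomial basis takes the diagonal form below -/
  ip : A →ₗ[ℚ] A →ₗ[ℚ] ℚ
  ip_bas : ∀ (d : ℕ →₀ ℕ) (T : Finset ℕ) (d' : ℕ →₀ ℕ) (T' : Finset ℕ),
    ip (bas (d, T)) (bas (d', T')) =
      if d = d' ∧ T = T' then d.prod (fun k n => (Nat.factorial n : ℚ) / ((k : ℚ) + 1)^n)
      else 0
  /-- `⟨f·a, b⟩ = ⟨a, f^⊥ b⟩` : `perp f` is the adjoint of multiplication by `f` -/
  perp_adj : ∀ f a b, ip (f * a) b = ip a (perp f b)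
  /-- a uniform truncation bound: beyond `bnd f`, the annihilation operators
  kill `f` -/
  bnd : A → ℕ
  bnd_Dθ : ∀ f k, bnd f ≤ k → Dθ k f = 0
  bnd_Dx : ∀ f k, bnd f ≤ k → Dx k f = 0
  bnd_eperp : ∀ f k, bnd f ≤ k → perp (e k) f = 0
  bnd_hperp : ∀ f k, bnd f ≤ k → perp (h k) f = 0
  bnd_etperp : ∀ f k, bnd f ≤ k → perp (et k) f = 0
  bnd_htperp : ∀ f k, bnd f ≤ k → perp (ht k) f = 0
  /-- the automorphism `ω` -/
  ω : A →ₐ[ℚ] A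
  ω_x : ∀ n, 1 ≤ n → ω (x n) = ((-1 : ℚ))^(n-1) • x n
  ω_θ : ∀ n, 1 ≤ n → ω (θ n) = ((-1 : ℚ))^(n-1) • θ n
  ω_invol : ∀ a, ω (ω a) = a
  /-- the automorphism `ρ` -/
  ρ : A →ₐ[ℚ] A
  ρ_x : ∀ n, 1 ≤ n → ρ (x n) = ((-1 : ℚ))^(n-1) • x n
  ρ_θ : ∀ n, 1 ≤ n → ρ (θ n) = et (n-1)
  ρ_invol : ∀ a, ρ (ρ a) = a
  /-- `ρ^⊥`, the adjoint of `ρ` with respect to the scalar product -/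
  ρperp : A →ₗ[ℚ] A
  ρperp_adj : ∀ a b, ip (ρ a) b = ip a (ρperp b)
  /-- `φ^⊥`, the adjoint of `φ = ω ∘ ρ` with respect to the scalar product -/
  φperp : A →ₗ[ℚ] A
  φperp_adj : ∀ a b, ip (ω (ρ a)) b = ip a (φperp b)
  /-- `(φ^⊥)⁻¹`, the inverse of `φ^⊥` -/
  φperpInv : A →ₗ[ℚ] A
  φperpInv_left : ∀ a, φperpInv (φperp a) = a
  φperpInv_right : ∀ a, φperp (φperpInv a) = a
  /-- the type I Schur functions in superspace `s_Λ = P_Λ(q=0, t=0)` -/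
  sI : SuperPartition → A
  /-- the type I* Schur functions in superspace `s*_Λ` (dual basis of the `s_Λ`) -/
  sIstar : SuperPartition → A
  /-- the type II Schur functions in superspace `s̄_Λ = P_Λ(q=∞, t=∞)` -/
  sII : SuperPartition → A
  /-- the type II* Schur functions in superspace `s̄*_Λ` (dual basis of the `s̄_Λ`) -/
  sIIstar : SuperPartition → A
  sI_dual : ∀ Λ Ω, ip (sI Λ) (sIstar Ω) = if Λ = Ω then 1 else 0
  sII_dual : ∀ Λ Ω, ip (sII Λ) (sIIstar Ω) = if Λ = Ω then 1 else 0

/-- the modes of `exp (∑_{n>0} w^n a_n)` where `n • a_n = T n`: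
`expModes T s` is the coefficient of `w^s`. -/
noncomputable def expModes {A : Type*} [Ring A] [Algebra ℚ A] (T : ℕ → A → A) : ℕ → A → A
  | 0 => fun f => f
  | n + 1 => fun f =>
      ((n : ℚ) + 1)⁻¹ • ∑ k ∈ Finset.range (n + 1), T (k + 1) (expModes T (n - k) f)
decreasing_by exact Nat.lt_succ_of_le (Nat.sub_le n k)

namespace SSF

variable {A : Type*} [Ring A] [Algebra ℚ A] (S : SSF A)

/-- `h_n` for `n ∈ ℤ` (with `h_n = 0` for `n < 0`) -/
def hZ (n : ℤ) : A := if 0 ≤ n then S.h n.toNat else 0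

/-- `e_n` for `n ∈ ℤ` (with `e_n = 0` for `n < 0`) -/
def eZ (n : ℤ) : A := if 0 ≤ n then S.e n.toNat else 0

/-- `h̃_n` for `n ∈ ℤ` (with `h̃_n = 0` for `n < 0`) -/
def htZ (n : ℤ) : A := if 0 ≤ n then S.ht n.toNat else 0

/-- `ẽ_n` for `n ∈ ℤ` (with `ẽ_n = 0` for `n < 0`) -/
def etZ (n : ℤ) : A := if 0 ≤ n then S.et n.toNat else 0

/-- `θ_n` for `n ∈ ℤ` (with `θ_n = 0` for `n ≤ 0`) -/
def θZ (n : ℤ) : A := if 1 ≤ n then S.θ n.toNat else 0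

/-- `e_r^⊥` -/
def ePerp (r : ℕ) : A → A := fun f => S.perp (S.e r) f

/-- `h_r^⊥` -/
def hPerp (r : ℕ) : A → A := fun f => S.perp (S.h r) f

/-- `ẽ_r^⊥` -/
def etPerp (r : ℕ) : A → A := fun f => S.perp (S.et r) f

/-- `∂_{ẽ_m} = (−1)^m ∑_{s≥0} h_s ∂_{θ_{m+s+1}}` (explicit locally finite form) -/
def de (m : ℕ) (f : A) : A :=
  ((-1 : ℚ))^m • ∑ s ∈ Finset.range (S.bnd f), S.h s * S.Dθ (m+s+1) f

/-- `∂_{ẽ_m}^⊥ = (−1)^m ∑_{s≥0} θ_{m+s+1} ∘ h_s^⊥` -/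
def deperp (m : ℕ) (f : A) : A :=
  ((-1 : ℚ))^m • ∑ s ∈ Finset.range (S.bnd f), S.θ (m+s+1) * S.perp (S.h s) f

/-- `β_n = ∑_{r>0} θ_{r+n} ∂_{θ_r}` (for `n > 0`) -/
def βp (n : ℕ) (f : A) : A :=
  ∑ r ∈ Finset.range (S.bnd f), S.θ (r+1+n) * S.Dθ (r+1) f

/-- `β_{−n} = ∑_{r>0} θ_r ∂_{θ_{r+n}}` (for `n > 0`) -/
def βm (n : ℕ) (f : A) : A :=
  ∑ r ∈ Finset.range (S.bnd f), S.θ (r+1) * S.Dθ (r+1+n) f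

/-- the modes of `V₊(z) = exp(−∑_{n>0} (zⁿ/n) β_n)`:  `Vp s` is the
coefficient of `z^s` -/
def Vp : ℕ → A → A := expModes (fun k f => - S.βp k f)

/-- the modes of `V₊(z)⁻¹` -/
def VpInv : ℕ → A → A := expModes (fun k f => S.βp k f)

/-- the modes of `V₋(z) = exp(−∑_{n>0} (z⁻ⁿ/(−n)) β_{−n})`:  `Vm s` is the
coefficient of `z^{−s}` -/
def Vm : ℕ → A → A := expModes (fun k f => S.βm k f)

/-- the modes of `V₋(z)⁻¹` -/
def VmInv : ℕ → A → A := expModes (fun k f => - S.βm k f)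

/-- the odd type I Bernstein operator in superspace
`B_n^{(1)} = ∑_{r≥0} (−1)^r θ_{n+r+1} ∘ e_r^⊥` -/
def B1 (n : ℤ) (f : A) : A :=
  ∑ r ∈ Finset.range (S.bnd f), ((-1 : ℚ))^r • (S.θZ (n + (r : ℤ) + 1) * S.ePerp r f)

/-- the even type I Bernstein operator in superspace `B_n^{(0)} = ∂_{ẽ₀} ∘ B_n^{(1)}` -/
def B0 (n : ℤ) (f : A) : A := S.de 0 (S.B1 n f)

/-- `B_n^{(ε)}` -/
def Bmode (n : ℤ) (ε : ℕ) (f : A) : A := if ε = 0 then S.B0 n f else S.B1 n f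

/-- the even type I* Bernstein operator in superspace
`C_n^{(0)} = ∑_{r≥0} (−1)^r h_{n+r} ∘ e_r^⊥` -/
def C0 (n : ℤ) (f : A) : A :=
  ∑ r ∈ Finset.range (S.bnd f), ((-1 : ℚ))^r • (S.hZ (n + (r : ℤ)) * S.ePerp r f)

/-- the odd type I* Bernstein operator in superspace `C_n^{(1)} = ∂_{ẽ₀}^⊥ ∘ C_n^{(0)}` -/
def C1 (n : ℤ) (f : A) : A := S.deperp 0 (S.C0 n f)

/-- `C_n^{(ε)}` -/
def Cmode (n : ℤ) (ε : ℕ) (f : A) : A := if ε = 0 then S.C0 n f else S.C1 n f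

/-- the type II Bernstein operators `B̄_n^{(ε)}`: the modes of
`B̄(z;η) = V₊(z) H(z;η) E^⊥(−z⁻¹) = ∑_{n,ε} z^n η^ε B̄_n^{(ε)}` -/
def Bbar (n : ℤ) (ε : ℕ) (f : A) : A :=
  ∑ r ∈ Finset.range (S.bnd f),
    ((-1 : ℚ))^r •
      ∑ s ∈ Finset.range ((n + (r : ℤ)).toNat + 1),
        S.Vp s
          ((if ε = 0 then S.hZ (n + (r : ℤ) - (s : ℤ)) else S.htZ (n + (r : ℤ) - (s : ℤ))) *
            S.ePerp r f)

/-- the modes `K_n^{(ε)}` of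
`K(z;η) = V₊(z)⁻¹ H(z) (∑_{r≥0} z^{−r} ∂_{θ_{r+1}}) exp(−η θ₁) E^⊥(−z⁻¹)
        = ∑_{n ∈ ℤ} z^n (η K_n^{(0)} + K_n^{(1)})` -/
def Kmode (n : ℤ) (ε : ℕ) (f : A) : A :=
  ∑ j ∈ Finset.range (S.bnd f),
    ((-1 : ℚ))^j •
      (let g : A := if ε = 0 then S.θ 1 * S.ePerp j f else S.ePerp j f
       ∑ r ∈ Finset.range (S.bnd g),
         ∑ u ∈ Finset.range ((n + (r : ℤ) + (j : ℤ)).toNat + 1),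
           S.VpInv u (S.hZ (n + (r : ℤ) + (j : ℤ) - (u : ℤ)) * S.Dθ (r+1) g))

end SSF

/-- `SSF` together with the truncation bounds for the (degree-lowering)
modes of `V₋(z)` and `V₋(z)⁻¹`. -/
structure SSFX (A : Type*) [Ring A] [Algebra ℚ A] extends SSF A where
  bnd_Vm : ∀ (f : A) (u : ℕ), toSSF.bnd f ≤ u → toSSF.Vm u f = 0
  bnd_VmInv : ∀ (f : A) (u : ℕ), toSSF.bnd f ≤ u → toSSF.VmInv u f = 0

namespace SSFX

variable {A : Type*} [Ring A] [Algebra ℚ A] (X : SSFX A)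

/-- the type II* Bernstein operators `C̄_n^{(ε)}`: the modes of
`C̄(z;η) = H(z) c̄(z;η) E^⊥(−z⁻¹) V₋(z) = ∑_{n,ε} z^n η^{1−ε} C̄_n^{(ε)}`,
where `c̄(z;η) = exp(η ∂_{θ₁}) ∑_{r≥0} z^r θ_{r+1}`. -/
def Cbar (n : ℤ) (ε : ℕ) (f : A) : A :=
  ∑ u ∈ Finset.range (X.toSSF.bnd f),
    ∑ j ∈ Finset.range (X.toSSF.bnd (X.toSSF.Vm u f)),
      ((-1 : ℚ))^j •
        ∑ r ∈ Finset.range ((n + (j : ℤ) + (u : ℤ)).toNat + 1),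
          X.toSSF.hZ (n + (j : ℤ) + (u : ℤ) - (r : ℤ)) *
            (if ε = 0
              then X.toSSF.Dθ 1 (X.toSSF.θ (r+1) * X.toSSF.ePerp j (X.toSSF.Vm u f))
              else X.toSSF.θ (r+1) * X.toSSF.ePerp j (X.toSSF.Vm u f))

/-- the modes `L_n^{(ε)}` of
`L(z;η) = H(z) E^⊥(−z⁻¹;η) V₋(z)⁻¹ = ∑_{n ∈ ℤ} z^n (L_n^{(0)} + η L_n^{(1)})` -/
def Lmode (n : ℤ) (ε : ℕ) (f : A) : A :=
  ∑ u ∈ Finset.range (X.toSSF.bnd f),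
    ∑ k ∈ Finset.range (X.toSSF.bnd (X.toSSF.VmInv u f)),
      (((-1 : ℚ))^k * (if ε = 0 then 1 else -1)) •
        (X.toSSF.hZ (n + (k : ℤ) + (u : ℤ)) *
          (if ε = 0 then X.toSSF.ePerp k (X.toSSF.VmInv u f)
           else X.toSSF.etPerp k (X.toSSF.VmInv u f)))

end SSFX

/-- The combinatorial conditions on the pair `(Λ, Ω)` appearing in the
Pieri rule for `e_r s*_Λ`:  `Ω*/Λ*` is a vertical `r`-strip, the fermionic
degrees agree, and the circles move according to the rules: a circle cannot
overpass another one (circles move only downwards, the `j`-th circle of `Λ`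
becoming the `j`-th circle of `Ω`); a circle cannot end up in a row with an
added box; a circle moves only when a (bosonic) box is added to its row, in
which case it is bumped (repeatedly) to the end of the first subsequent row
having no added box.  (In particular `Ω⊛/Λ⊛` is also a vertical strip.) -/
def SuperPartition.EPieriRule (r : ℕ) (Λ Ω : SuperPartition) : Prop :=
  Ω.fdeg = Λ.fdeg ∧
  (∀ i, Λ.starPart i ≤ Ω.starPart i ∧ Ω.starPart i ≤ Λ.starPart i + 1) ∧
  Ω.star.sum = Λ.star.sum + r ∧
  (∀ i, Λ.circPart i ≤ Ω.circPart i ∧ Ω.circPart i ≤ Λ.circPart i + 1) ∧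
  (∀ i, Ω.circPart i = Ω.starPart i + 1 → Ω.starPart i = Λ.starPart i) ∧
  (∀ j, j < Λ.fdeg → Λ.circleRows.getD j 0 ≤ Ω.circleRows.getD j 0) ∧
  (∀ j, j < Λ.fdeg →
    Ω.starPart (Λ.circleRows.getD j 0) = Λ.starPart (Λ.circleRows.getD j 0) →
    Ω.circleRows.getD j 0 = Λ.circleRows.getD j 0) ∧
  (∀ j, j < Λ.fdeg → ∀ i, Λ.circleRows.getD j 0 < i → i < Ω.circleRows.getD j 0 →
    Ω.starPart i = Λ.starPart i + 1)

-- Batch 1: generic sum helpers + basic SSF lemmas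
open Finset in
lemma tri_sum {M : Type*} [AddCommMonoid M] (n : ℕ) (F : ℕ → ℕ → M) :
    ∑ m ∈ range n, ∑ k ∈ range (m+1), F k (m-k)
      = ∑ k ∈ range n, ∑ j ∈ range (n-k), F k j := by
  induction n with
  | zero => simp
  | succ n ih =>
    rw [Finset.sum_range_succ, ih]
    have h2 : ∀ k ∈ range (n+1), ∑ j ∈ range (n+1-k), F k j
        = ∑ j ∈ range (n-k), F k j + F k (n-k) := by
      intro k hk
      have hk' : k ≤ n := by simpa [Nat.lt_succ_iff] using hk
      have : n + 1 - k = (n - k) + 1 := by omega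
      rw [this, Finset.sum_range_succ]
    rw [Finset.sum_congr rfl h2, Finset.sum_add_distrib]
    congr 1
    rw [Finset.sum_range_succ]
    have : n - n = 0 := by omega
    simp [this]

open Finset in
lemma tri_swap {M : Type*} [AddCommMonoid M] (n : ℕ) (H : ℕ → ℕ → M) :
    ∑ k ∈ range n, ∑ j ∈ range (n-k), H k j
      = ∑ j ∈ range n, ∑ k ∈ range (n-j), H k j := by
  rw [← tri_sum n H, ← tri_sum n (fun a b => H b a)]
  apply Finset.sum_congr rfl
  intro m hm
  rw [← Finset.sum_range_reflect]
  apply Finset.sum_congr rfl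
  intro k hk
  have hk' : k ≤ m := by simpa [Nat.lt_succ_iff] using hk
  have h1 : m + 1 - 1 - k = m - k := by omega
  have h2 : m - (m - k) = k := by omega
  rw [h1, h2]

open Finset in
lemma sum_ext_zero {M : Type*} [AddCommMonoid M] (g : ℕ → M) (B N : ℕ) (hBN : B ≤ N)
    (hz : ∀ i, B ≤ i → g i = 0) :
    ∑ i ∈ range N, g i = ∑ i ∈ range B, g i := by
  refine (Finset.sum_subset (Finset.range_subset_range.2 hBN) ?_).symm
  intro i _ hi
  exact hz i (by simpa using hi)

lemma smul_cancelQ {A : Type*} [AddCommGroup A] [Module ℚ A] {c : ℚ} (hc : c ≠ 0)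
    {a b : A} (h : c • a = c • b) : a = b := by
  have := congrArg (fun z => c⁻¹ • z) h
  simpa [smul_smul, inv_mul_cancel₀ hc] using this

namespace SSF
variable {A : Type*} [Ring A] [Algebra ℚ A] (S : SSF A)

lemma sigma_one : S.σ (1 : A) = 1 := map_one S.σ

lemma Dx_one (k : ℕ) : S.Dx k 1 = 0 := by
  have h := S.Dx_leibniz k 1 1
  rw [one_mul, mul_one, one_mul] at h
  exact (left_eq_add.mp h)

lemma Dθ_one (k : ℕ) : S.Dθ k 1 = 0 := by
  have h := S.Dθ_leibniz k 1 1
  rw [one_mul, mul_one, S.sigma_one, one_mul] at h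
  exact (left_eq_add.mp h)

lemma Dx_x01 {j : ℕ} (hj : 1 ≤ j) (k m : ℕ) : S.Dx k (S.Dx j (S.x m)) = 0 := by
  rw [S.Dx_x j m hj]
  split_ifs
  · exact S.Dx_one k
  · exact map_zero _

lemma Dθ_x01 {j : ℕ} (hj : 1 ≤ j) (k m : ℕ) : S.Dθ k (S.Dx j (S.x m)) = 0 := by
  rw [S.Dx_x j m hj]
  split_ifs
  · exact S.Dθ_one k
  · exact map_zero _

lemma Dx_θ01 {j : ℕ} (hj : 1 ≤ j) (k m : ℕ) : S.Dx k (S.Dθ j (S.θ m)) = 0 := by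
  rw [S.Dθ_θ j m hj]
  split_ifs
  · exact S.Dx_one k
  · exact map_zero _

/-- extension principle: a "derivation-like" linear map vanishing on generators is zero -/
lemma ext_zero (D : A →ₗ[ℚ] A) (h1 : D 1 = 0)
    (hx : ∀ k, D (S.x k) = 0) (hθ : ∀ k, D (S.θ k) = 0)
    (hmul : ∀ a b, D a = 0 → D b = 0 → D (a * b) = 0) : ∀ a, D a = 0 := by
  have hpow : ∀ (a : A), D a = 0 → ∀ m : ℕ, D (a ^ m) = 0 := by
    intro a ha m
    induction m with
    | zero => simpa using h1
    | succ m ih => rw [pow_succ]; exact hmul _ _ ih ha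
  have hlist : ∀ l : List A, (∀ y ∈ l, D y = 0) → D l.prod = 0 := by
    intro l
    induction l with
    | nil => intro _; simpa using h1
    | cons a l ih =>
      intro h
      rw [List.prod_cons]
      exact hmul _ _ (h a (by simp)) (ih fun y hy => h y (by simp [hy]))
  have : D = 0 := by
    apply S.bas.ext
    rintro ⟨d, T⟩
    rw [S.bas_eq, LinearMap.zero_apply]
    apply hmul
    · apply hlist
      intro y hy
      rcases List.mem_map.mp hy with ⟨k, _, rfl⟩
      exact hpow _ (hx _) _
    · apply hlist
      intro y hy
      rcases List.mem_map.mp hy with ⟨k, _, rfl⟩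
      exact hθ _
  intro a; rw [this]; rfl

lemma sigma_Dx {k : ℕ} (hk : 1 ≤ k) (a : A) : S.σ (S.Dx k a) = S.Dx k (S.σ a) := by
  set D : A →ₗ[ℚ] A := S.σ.toLinearMap ∘ₗ S.Dx k - S.Dx k ∘ₗ S.σ.toLinearMap with hD
  have hda : ∀ b, D b = S.σ (S.Dx k b) - S.Dx k (S.σ b) := fun b => rfl
  have key : ∀ b, D b = 0 := by
    apply S.ext_zero
    · rw [hda, S.Dx_one, S.sigma_one, S.Dx_one, map_zero, sub_zero]
    · intro j
      rw [hda, S.σ_x]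
      rw [S.Dx_x k j hk]
      split_ifs with h
      · rw [S.sigma_one, sub_self]
      · rw [map_zero, sub_self]
    · intro j
      rw [hda, S.Dx_θ, S.σ_θ, map_neg, S.Dx_θ, map_zero, neg_zero, sub_zero]
    · intro a b ha hb
      rw [hda, sub_eq_zero] at ha hb
      have e1 : S.σ (S.Dx k (a * b)) = S.Dx k (S.σ a) * S.σ b + S.σ a * S.Dx k (S.σ b) := by
        rw [S.Dx_leibniz, map_add, map_mul, map_mul, ha, hb]
      have e2 : S.Dx k (S.σ (a * b)) = S.Dx k (S.σ a) * S.σ b + S.σ a * S.Dx k (S.σ b) := by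
        rw [map_mul, S.Dx_leibniz]
      rw [hda, e1, e2, sub_self]
  have := key a
  rw [hda, sub_eq_zero] at this
  exact this

lemma Dx_Dx_comm {j k : ℕ} (hj : 1 ≤ j) (hk : 1 ≤ k) (a : A) :
    S.Dx j (S.Dx k a) = S.Dx k (S.Dx j a) := by
  set D : A →ₗ[ℚ] A := S.Dx j ∘ₗ S.Dx k - S.Dx k ∘ₗ S.Dx j with hD
  have hda : ∀ b, D b = S.Dx j (S.Dx k b) - S.Dx k (S.Dx j b) := fun b => rfl
  have key : ∀ b, D b = 0 := by
    apply S.ext_zero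
    · rw [hda, S.Dx_one, S.Dx_one, map_zero, map_zero, sub_zero]
    · intro m
      rw [hda, S.Dx_x01 hk j m, S.Dx_x01 hj k m, sub_self]
    · intro m
      rw [hda, S.Dx_θ, S.Dx_θ, map_zero, map_zero, sub_zero]
    · intro a b ha hb
      rw [hda, sub_eq_zero] at ha hb
      have e1 : S.Dx j (S.Dx k (a * b)) =
          S.Dx j (S.Dx k a) * b + S.Dx k a * S.Dx j b + (S.Dx j a * S.Dx k b + a * S.Dx j (S.Dx k b)) := by
        rw [S.Dx_leibniz k a b, map_add, S.Dx_leibniz, S.Dx_leibniz]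
      have e2 : S.Dx k (S.Dx j (a * b)) =
          S.Dx k (S.Dx j a) * b + S.Dx j a * S.Dx k b + (S.Dx k a * S.Dx j b + a * S.Dx k (S.Dx j b)) := by
        rw [S.Dx_leibniz j a b, map_add, S.Dx_leibniz, S.Dx_leibniz]
      rw [hda, e1, e2, ha, hb]
      abel
  have := key a
  rw [hda, sub_eq_zero] at this
  exact this

lemma Dx_Dθ_comm {j k : ℕ} (hj : 1 ≤ j) (hk : 1 ≤ k) (a : A) :
    S.Dx j (S.Dθ k a) = S.Dθ k (S.Dx j a) := by
  set D : A →ₗ[ℚ] A := S.Dx j ∘ₗ S.Dθ k - S.Dθ k ∘ₗ S.Dx j with hD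
  have hda : ∀ b, D b = S.Dx j (S.Dθ k b) - S.Dθ k (S.Dx j b) := fun b => rfl
  have key : ∀ b, D b = 0 := by
    apply S.ext_zero
    · rw [hda, S.Dθ_one, S.Dx_one, map_zero, map_zero, sub_zero]
    · intro m
      rw [hda, S.Dθ_x, map_zero, S.Dθ_x01 hj k m, sub_self]
    · intro m
      rw [hda, S.Dx_θ, map_zero, S.Dx_θ01 hk j m, zero_sub, neg_eq_zero]
    · intro a b ha hb
      rw [hda, sub_eq_zero] at ha hb
      have e1 : S.Dx j (S.Dθ k (a * b)) =
          S.Dθ k (S.Dx j a) * b + S.Dθ k a * S.Dx j b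
            + (S.Dx j (S.σ a) * S.Dθ k b + S.σ a * S.Dθ k (S.Dx j b)) := by
        rw [S.Dθ_leibniz k a b, map_add, S.Dx_leibniz, S.Dx_leibniz, ha, hb]
      have e2 : S.Dθ k (S.Dx j (a * b)) =
          S.Dθ k (S.Dx j a) * b + S.Dx j (S.σ a) * S.Dθ k b
            + (S.Dθ k a * S.Dx j b + S.σ a * S.Dθ k (S.Dx j b)) := by
        rw [S.Dx_leibniz j a b, map_add, S.Dθ_leibniz, S.Dθ_leibniz, S.sigma_Dx hj]
      rw [hda, e1, e2]
      abel
  have := key a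
  rw [hda, sub_eq_zero] at this
  exact this

end SSF

namespace SSF
variable {A : Type*} [Ring A] [Algebra ℚ A] (S : SSF A)

lemma h_comm : ∀ t (a : A), S.h t * a = a * S.h t := by
  intro t
  induction t using Nat.strong_induction_on with
  | _ t ih =>
    intro a
    match t with
    | 0 => rw [S.h_zero, one_mul, mul_one]
    | Nat.succ n =>
      apply smul_cancelQ (c := (n:ℚ)+1) (by positivity)
      rw [← smul_mul_assoc, ← mul_smul_comm, S.h_rec n, Finset.sum_mul, Finset.mul_sum]
      apply Finset.sum_congr rfl
      intro k hk
      have hk' : k < n+1 := Finset.mem_range.mp hk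
      rw [smul_mul_assoc, mul_smul_comm]
      congr 1
      rw [mul_assoc, ih (n-k) (by omega) a, ← mul_assoc, S.x_central, mul_assoc]

lemma Dx_h {k : ℕ} (hk : 1 ≤ k) : ∀ t, S.Dx k (S.h t) = if k ≤ t then S.h (t - k) else 0 := by
  intro t
  induction t using Nat.strong_induction_on with
  | _ t ih =>
    match t with
    | 0 => rw [S.h_zero, S.Dx_one, if_neg (by omega)]
    | Nat.succ n =>
      apply smul_cancelQ (c := (n:ℚ)+1) (by positivity)
      rw [← map_smul, S.h_rec n, map_sum]
      have hterm : ∀ j ∈ Finset.range (n+1),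
          S.Dx k (((j:ℚ)+1) • (S.x (j+1) * S.h (n-j)))
            = ((j:ℚ)+1) • ((if j+1 = k then (1:A) else 0) * S.h (n-j))
              + ((j:ℚ)+1) • (S.x (j+1) * (if k ≤ n-j then S.h (n-j-k) else 0)) := by
        intro j hj
        rw [map_smul, S.Dx_leibniz, S.Dx_x k (j+1) hk, ih (n-j) (by omega), smul_add]
      rw [Finset.sum_congr rfl hterm, Finset.sum_add_distrib]
      have h1 : ∑ j ∈ Finset.range (n+1),
          ((j:ℚ)+1) • ((if j+1 = k then (1:A) else 0) * S.h (n-j))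
            = if k ≤ n+1 then (k:ℚ) • S.h (n+1-k) else 0 := by
        by_cases hc : k ≤ n+1
        · rw [if_pos hc, Finset.sum_eq_single (k-1)]
          · rw [if_pos (by omega), one_mul]
            have e : n - (k-1) = n+1-k := by omega
            rw [e]
            congr 1
            push_cast [Nat.cast_sub (show 1 ≤ k from hk)]
            ring
          · intro b _ hb
            rw [if_neg (by omega), zero_mul, smul_zero]
          · intro hnot
            exact absurd (Finset.mem_range.mpr (by omega)) hnot
        · rw [if_neg hc]
          apply Finset.sum_eq_zero
          intro j hj
          have : j < n+1 := Finset.mem_range.mp hj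
          rw [if_neg (by omega), zero_mul, smul_zero]
      have h2 : ∑ j ∈ Finset.range (n+1),
          ((j:ℚ)+1) • (S.x (j+1) * (if k ≤ n-j then S.h (n-j-k) else 0))
            = if k ≤ n then (((n-k : ℕ):ℚ)+1) • S.h (n+1-k) else 0 := by
        by_cases hc : k ≤ n
        · rw [if_pos hc]
          rw [sum_ext_zero _ (n-k+1) (n+1) (by omega)
            (fun j hjge => by rw [if_neg (by omega), mul_zero, smul_zero])]
          have e2 : ∀ j ∈ Finset.range (n-k+1),
              ((j:ℚ)+1) • (S.x (j+1) * (if k ≤ n-j then S.h (n-j-k) else 0))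
                = ((j:ℚ)+1) • (S.x (j+1) * S.h (n-k-j)) := by
            intro j hj
            have hj' : j < n-k+1 := Finset.mem_range.mp hj
            rw [if_pos (by omega)]
            have : n - j - k = n - k - j := by omega
            rw [this]
          rw [Finset.sum_congr rfl e2, ← S.h_rec (n-k)]
          have : n - k + 1 = n + 1 - k := by omega
          rw [this]
        · rw [if_neg hc]
          apply Finset.sum_eq_zero
          intro j hj
          rw [if_neg (by omega), mul_zero, smul_zero]
      rw [h1, h2]
      by_cases hc : k ≤ n
      · rw [if_pos (by omega : k ≤ n+1), if_pos hc, if_pos (by omega : k ≤ n+1), ← add_smul]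
        congr 1
        push_cast [Nat.cast_sub hc]
        ring
      · by_cases hc2 : k = n+1
        · subst hc2
          rw [if_pos (le_refl _), if_neg hc, if_pos (le_refl _), add_zero]
          congr 1
          push_cast
          ring
        · rw [if_neg (by omega), if_neg hc, if_neg (by omega), add_zero, smul_zero]

lemma eperp_zero (a : A) : S.perp (S.e 0) a = a := by
  rw [S.e_zero, S.perp_one, Module.End.one_apply]

lemma eperp_rec (n : ℕ) (a : A) :
    ((n:ℚ)+1) • S.perp (S.e (n+1)) a
      = ∑ k ∈ Finset.range (n+1), ((-1:ℚ))^k • S.perp (S.e (n-k)) (S.Dx (k+1) a) := by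
  have h := congrArg S.perp (S.e_rec n)
  rw [map_smul, map_sum] at h
  have h' := congrArg (fun (T : Module.End ℚ A) => T a) h
  simp only [LinearMap.smul_apply, LinearMap.sum_apply] at h'
  rw [h']
  apply Finset.sum_congr rfl
  intro k hk
  have hx1 : S.perp (S.x (k+1)) = (((k:ℚ)+1))⁻¹ • S.Dx (k+1) := by
    rw [S.perp_x (k+1) (by omega)]
    norm_num
  rw [map_smul, LinearMap.smul_apply, S.perp_mul, Module.End.mul_apply, hx1,
    LinearMap.smul_apply, map_smul, smul_smul]
  congr 1
  have : ((k:ℚ)+1) ≠ 0 := by positivity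
  field_simp

lemma eperp_one' {j : ℕ} (hj : 1 ≤ j) : S.perp (S.e j) (1 : A) = 0 := by
  obtain ⟨m, rfl⟩ : ∃ m, j = m + 1 := ⟨j - 1, by omega⟩
  apply smul_cancelQ (c := (m:ℚ)+1) (by positivity)
  rw [S.eperp_rec m 1, smul_zero]
  apply Finset.sum_eq_zero
  intro k _
  rw [S.Dx_one, map_zero, smul_zero]

lemma eperp_mul : ∀ r (a b : A), S.perp (S.e r) (a * b)
    = ∑ i ∈ Finset.range (r+1), S.perp (S.e i) a * S.perp (S.e (r-i)) b := by
  intro r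
  induction r using Nat.strong_induction_on with
  | _ r ih =>
    intro a b
    match r with
    | 0 => simp [S.eperp_zero]
    | Nat.succ n =>
      apply smul_cancelQ (c := (n:ℚ)+1) (by positivity)
      rw [S.eperp_rec n (a*b)]
      have hL : ∀ k ∈ Finset.range (n+1),
          ((-1:ℚ))^k • S.perp (S.e (n-k)) (S.Dx (k+1) (a*b))
            = (∑ i ∈ Finset.range (n-k+1),
                ((-1:ℚ))^k • (S.perp (S.e i) (S.Dx (k+1) a) * S.perp (S.e (n-k-i)) b))
              + (∑ i ∈ Finset.range (n-k+1),
                ((-1:ℚ))^k • (S.perp (S.e i) a * S.perp (S.e (n-k-i)) (S.Dx (k+1) b))) := by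
        intro k hk
        rw [S.Dx_leibniz, map_add, ih (n-k) (by omega), ih (n-k) (by omega), smul_add,
          Finset.smul_sum, Finset.smul_sum]
      rw [Finset.sum_congr rfl hL, Finset.sum_add_distrib, Finset.smul_sum]
      have hR : ∀ i ∈ Finset.range (n+2),
          ((n:ℚ)+1) • (S.perp (S.e i) a * S.perp (S.e (n+1-i)) b)
            = ((i:ℚ) • S.perp (S.e i) a) * S.perp (S.e (n+1-i)) b
              + S.perp (S.e i) a * ((((n+1-i : ℕ)):ℚ) • S.perp (S.e (n+1-i)) b) := by
        intro i hi
        have hi' : i ≤ n+1 := by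
          have := Finset.mem_range.mp hi; omega
        rw [smul_mul_assoc, mul_smul_comm, ← add_smul]
        congr 1
        push_cast [Nat.cast_sub hi']
        ring
      rw [Finset.sum_congr rfl hR, Finset.sum_add_distrib]
      congr 1
      · -- first halves agree
        conv_rhs => rw [Finset.sum_range_succ']
        simp only [Nat.cast_zero, zero_smul, zero_mul, add_zero]
        have e1 : ∀ m ∈ Finset.range (n+1),
            (((m+1 : ℕ):ℚ) • S.perp (S.e (m+1)) a) * S.perp (S.e (n+1-(m+1))) b
              = ∑ k ∈ Finset.range (m+1),
                  ((-1:ℚ))^k • (S.perp (S.e (m-k)) (S.Dx (k+1) a) * S.perp (S.e (n-k-(m-k))) b) := by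
          intro m hm
          have hm' : m ≤ n := by have := Finset.mem_range.mp hm; omega
          have hc : ((m+1 : ℕ):ℚ) = (m:ℚ)+1 := by push_cast; ring
          rw [hc, S.eperp_rec m a, Finset.sum_mul]
          apply Finset.sum_congr rfl
          intro k hkm
          have hkm' : k ≤ m := by have := Finset.mem_range.mp hkm; omega
          rw [smul_mul_assoc]
          have hidx : n+1-(m+1) = n-k-(m-k) := by omega
          rw [hidx]
        rw [Finset.sum_congr rfl e1,
          tri_sum (n+1) (fun k j => ((-1:ℚ))^k •
            (S.perp (S.e j) (S.Dx (k+1) a) * S.perp (S.e (n-k-j)) b))]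
        apply Finset.sum_congr rfl
        intro k hk
        have hk' : k ≤ n := by have := Finset.mem_range.mp hk; omega
        have : n+1-k = n-k+1 := by omega
        rw [this]
      · -- second halves agree
        conv_rhs => rw [Finset.sum_range_succ]
        have hlast : S.perp (S.e (n+1)) a * ((((n+1-(n+1) : ℕ)):ℚ) • S.perp (S.e (n+1-(n+1))) b) = 0 := by
          simp
        rw [hlast, add_zero]
        have e2 : ∀ i ∈ Finset.range (n+1),
            S.perp (S.e i) a * ((((n+1-i : ℕ)):ℚ) • S.perp (S.e (n+1-i)) b)
              = ∑ k ∈ Finset.range (n+1-i),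
                  ((-1:ℚ))^k • (S.perp (S.e i) a * S.perp (S.e (n-i-k)) (S.Dx (k+1) b)) := by
          intro i hi
          have hi' : i ≤ n := by have := Finset.mem_range.mp hi; omega
          have h1 : n+1-i = (n-i)+1 := by omega
          rw [h1]
          have hc : (((n-i)+1 : ℕ):ℚ) = ((n-i : ℕ):ℚ)+1 := by push_cast; ring
          rw [hc, S.eperp_rec (n-i) b, Finset.mul_sum]
          apply Finset.sum_congr rfl
          intro k _
          rw [mul_smul_comm]
        rw [Finset.sum_congr rfl e2]
        have swap := tri_swap (n+1) (fun k i => ((-1:ℚ))^k •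
            (S.perp (S.e i) a * S.perp (S.e (n-i-k)) (S.Dx (k+1) b)))
        have lhs_eq : ∑ k ∈ Finset.range (n+1), ∑ i ∈ Finset.range (n-k+1),
              ((-1:ℚ))^k • (S.perp (S.e i) a * S.perp (S.e (n-k-i)) (S.Dx (k+1) b))
            = ∑ k ∈ Finset.range (n+1), ∑ i ∈ Finset.range (n+1-k),
              ((-1:ℚ))^k • (S.perp (S.e i) a * S.perp (S.e (n-i-k)) (S.Dx (k+1) b)) := by
          apply Finset.sum_congr rfl
          intro k hk
          have hk' : k ≤ n := by have := Finset.mem_range.mp hk; omega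
          have h1 : n+1-k = n-k+1 := by omega
          rw [h1]
          apply Finset.sum_congr rfl
          intro i _
          have h2 : n-k-i = n-i-k := by omega
          rw [h2]
        rw [lhs_eq, swap]
end SSF

namespace SSF
variable {A : Type*} [Ring A] [Algebra ℚ A] (S : SSF A)

lemma eperp_h : ∀ i t, S.perp (S.e i) (S.h t)
    = if i = 0 then S.h t else if i = 1 then (if 1 ≤ t then S.h (t-1) else 0) else 0 := by
  intro i
  induction i using Nat.strong_induction_on with
  | _ i ih =>
    intro t
    match i with
    | 0 => rw [if_pos rfl, S.eperp_zero]
    | 1 =>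
      rw [if_neg (by omega), if_pos rfl]
      have h := S.eperp_rec 0 (S.h t)
      rw [Finset.sum_range_one] at h
      norm_num at h
      rw [h, S.eperp_zero, S.Dx_h (by omega) t]
    | (m+2) =>
      rw [if_neg (by omega), if_neg (by omega)]
      apply smul_cancelQ (c := ((m+1 : ℕ):ℚ)+1) (by positivity)
      rw [S.eperp_rec (m+1) (S.h t), smul_zero]
      rw [Finset.sum_range_succ, Finset.sum_range_succ]
      have hz : ∑ k ∈ Finset.range m,
          ((-1:ℚ))^k • S.perp (S.e (m+1-k)) (S.Dx (k+1) (S.h t)) = 0 := by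
        apply Finset.sum_eq_zero
        intro k hk
        have hk' : k < m := Finset.mem_range.mp hk
        rw [S.Dx_h (by omega) t]
        split_ifs
        · rw [ih (m+1-k) (by omega), if_neg (by omega), if_neg (by omega), smul_zero]
        · rw [map_zero, smul_zero]
      rw [hz, zero_add]
      have hm1 : m+1-m = 1 := by omega
      have hm0 : m+1-(m+1) = 0 := by omega
      rw [hm1, hm0, S.eperp_zero, S.Dx_h (by omega) t, S.Dx_h (by omega) t]
      by_cases hc : m+2 ≤ t
      · rw [if_pos (by omega : m+1 ≤ t), if_pos hc, ih 1 (by omega),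
          if_neg (by omega), if_pos rfl, if_pos (by omega : 1 ≤ t - (m+1))]
        have e : t - (m+1) - 1 = t - (m+2) := by omega
        rw [e, pow_succ, mul_smul, neg_one_smul, ← smul_add]
        simp
      · by_cases hc2 : m+1 ≤ t
        · rw [if_pos hc2, if_neg hc, ih 1 (by omega), if_neg (by omega), if_pos rfl,
            if_neg (by omega)]
          simp
        · rw [if_neg hc2, if_neg (by omega), map_zero]
          simp

lemma eperp_h_mul (r t : ℕ) (g : A) :
    S.perp (S.e r) (S.h t * g)
      = S.h t * S.perp (S.e r) g
        + (if 1 ≤ r ∧ 1 ≤ t then S.h (t-1) * S.perp (S.e (r-1)) g else 0) := by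
  rw [S.eperp_mul r (S.h t) g]
  match r with
  | 0 =>
    rw [Finset.sum_range_one, S.eperp_h, if_pos rfl, if_neg (by omega), add_zero]
  | Nat.succ m =>
    rw [Finset.sum_range_succ', Finset.sum_range_succ']
    have hz : ∑ i ∈ Finset.range m,
        S.perp (S.e (i+1+1)) (S.h t) * S.perp (S.e (m+1-(i+1+1))) g = 0 := by
      apply Finset.sum_eq_zero
      intro i _
      rw [S.eperp_h, if_neg (by omega), if_neg (by omega), zero_mul]
    rw [hz, zero_add]
    rw [S.eperp_h, S.eperp_h, if_pos rfl, if_neg (by omega), if_pos rfl]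
    have e1 : m+1-(0+1) = m := by omega
    have e2 : m+1-0 = m+1 := by omega
    rw [e1, e2]
    by_cases hc : 1 ≤ t
    · rw [if_pos hc, if_pos ⟨by omega, hc⟩]
      rw [add_comm]
    · rw [if_neg hc, if_neg (by omega), zero_mul, zero_add, add_zero]

lemma Dθ_eperp {k : ℕ} (hk : 1 ≤ k) : ∀ r (a : A),
    S.Dθ k (S.perp (S.e r) a) = S.perp (S.e r) (S.Dθ k a) := by
  intro r
  induction r using Nat.strong_induction_on with
  | _ r ih =>
    intro a
    match r with
    | 0 => rw [S.eperp_zero, S.eperp_zero]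
    | Nat.succ n =>
      apply smul_cancelQ (c := (n:ℚ)+1) (by positivity)
      rw [← map_smul, S.eperp_rec n a, S.eperp_rec n (S.Dθ k a), map_sum]
      apply Finset.sum_congr rfl
      intro j _
      rw [map_smul, ih (n-j) (by omega), ← S.Dx_Dθ_comm (by omega) hk]

end SSF

open Finset in
lemma sum_shift1 {M : Type*} [AddCommMonoid M] (N : ℕ) (g : ℕ → M) (h0 : g 0 = 0) :
    ∑ i ∈ Finset.range N, g i = ∑ i ∈ Finset.range (N-1), g (i+1) := by
  match N with
  | 0 => simp
  | (m+1) =>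
    rw [Finset.sum_range_succ', h0, add_zero]
    simp

namespace SSF
variable {A : Type*} [Ring A] [Algebra ℚ A] (S : SSF A)

lemma de_ext (m : ℕ) (f : A) {M : ℕ} (hM : S.bnd f ≤ M) :
    S.de m f = ((-1:ℚ))^m • ∑ s ∈ Finset.range M, S.h s * S.Dθ (m+s+1) f := by
  unfold SSF.de
  congr 1
  exact (sum_ext_zero _ _ M hM (fun s hs => by
    rw [S.bnd_Dθ f _ (by omega), mul_zero])).symm

lemma de_zero (m : ℕ) : S.de m (0 : A) = 0 := by
  simp [SSF.de]

lemma claim1 (n : ℤ) (f : A) :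
    (∑ s ∈ Finset.range (S.bnd f), ∑ r ∈ Finset.range (S.bnd (S.de s f)),
        ((-1 : ℚ))^(r+s) • (S.θZ (n + (r : ℤ) + (s : ℤ) + 1) * S.ePerp r (S.de s f)))
      = (∑ r ∈ Finset.range (S.bnd f),
          ((-1 : ℚ))^r • (S.θZ (n + (r : ℤ) + 1) * S.de 0 (S.ePerp r f))) := by
  classical
  simp only [SSF.ePerp]
  set K := (Finset.range (2*S.bnd f+2)).sup (fun k => S.bnd (S.Dθ k f)) with hK
  set Rd := (Finset.range (S.bnd f)).sup (fun s => S.bnd (S.de s f)) with hRd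
  set R := S.bnd f + 1 + K + Rd with hR
  have hRde : ∀ s, s < S.bnd f → S.bnd (S.de s f) ≤ R := by
    intro s hs
    have h1 : S.bnd (S.de s f) ≤ Rd :=
      Finset.le_sup (f := fun s => S.bnd (S.de s f)) (Finset.mem_range.mpr hs)
    omega
  have hRDθ : ∀ m, m ≤ 2*S.bnd f+1 → S.bnd (S.Dθ m f) ≤ K := by
    intro m hm
    exact Finset.le_sup (f := fun k => S.bnd (S.Dθ k f)) (Finset.mem_range.mpr (by omega))
  have hRB : S.bnd f ≤ R := by omega
  set W : ℕ → A := fun s => ∑ r ∈ Finset.range R, ∑ t ∈ Finset.range (S.bnd f),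
      ((-1:ℚ))^r • (S.θZ (n + (r:ℤ) + (s:ℤ) + 1)
        * (S.h t * S.perp (S.e r) (S.Dθ (s+t+1) f))) with hW
  have hWB : W (S.bnd f) = 0 := by
    rw [hW]
    apply Finset.sum_eq_zero
    intro r _
    apply Finset.sum_eq_zero
    intro t _
    rw [S.bnd_Dθ f _ (by omega), map_zero, mul_zero, mul_zero, smul_zero]
  have stepA : ∀ s ∈ Finset.range (S.bnd f),
      (∑ r ∈ Finset.range (S.bnd (S.de s f)),
        ((-1 : ℚ))^(r+s) • (S.θZ (n + (r : ℤ) + (s : ℤ) + 1) * S.perp (S.e r) (S.de s f)))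
        = W s - W (s+1) := by
    intro s hs
    have hsB : s < S.bnd f := Finset.mem_range.mp hs
    rw [← sum_ext_zero (fun r => ((-1 : ℚ))^(r+s) •
        (S.θZ (n + (r : ℤ) + (s : ℤ) + 1) * S.perp (S.e r) (S.de s f)))
        (S.bnd (S.de s f)) R (hRde s hsB) (fun r hr => by
          simp only [S.bnd_eperp (S.de s f) r hr, mul_zero, smul_zero])]
    have hper : ∀ r ∈ Finset.range R,
        ((-1:ℚ))^(r+s) • (S.θZ (n+(r:ℤ)+(s:ℤ)+1) * S.perp (S.e r) (S.de s f))
          = (∑ t ∈ Finset.range (S.bnd f), ((-1:ℚ))^r • (S.θZ (n+(r:ℤ)+(s:ℤ)+1)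
              * (S.h t * S.perp (S.e r) (S.Dθ (s+t+1) f))))
            + (∑ t ∈ Finset.range (S.bnd f), ((-1:ℚ))^r • (S.θZ (n+(r:ℤ)+(s:ℤ)+1) *
                (if 1 ≤ r ∧ 1 ≤ t then S.h (t-1) * S.perp (S.e (r-1)) (S.Dθ (s+t+1) f) else 0))) := by
      intro r _
      rw [S.de_ext s f (le_refl _), map_smul, map_sum, mul_smul_comm, smul_smul]
      have hsign : ((-1:ℚ))^(r+s) * ((-1:ℚ))^s = ((-1:ℚ))^r := by
        rw [← pow_add, show r+s+s = r+2*s from by omega, pow_add, pow_mul]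
        norm_num
      rw [hsign, Finset.mul_sum, Finset.smul_sum]
      have hterm : ∀ t ∈ Finset.range (S.bnd f),
          ((-1:ℚ))^r • (S.θZ (n+(r:ℤ)+(s:ℤ)+1) * S.perp (S.e r) (S.h t * S.Dθ (s+t+1) f))
            = ((-1:ℚ))^r • (S.θZ (n+(r:ℤ)+(s:ℤ)+1) * (S.h t * S.perp (S.e r) (S.Dθ (s+t+1) f)))
              + ((-1:ℚ))^r • (S.θZ (n+(r:ℤ)+(s:ℤ)+1) *
                  (if 1 ≤ r ∧ 1 ≤ t then S.h (t-1) * S.perp (S.e (r-1)) (S.Dθ (s+t+1) f) else 0)) := by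
        intro t _
        rw [S.eperp_h_mul, mul_add, smul_add]
      rw [Finset.sum_congr rfl hterm, Finset.sum_add_distrib]
    rw [Finset.sum_congr rfl hper, Finset.sum_add_distrib]
    have hUs : W s = ∑ r ∈ Finset.range R, ∑ t ∈ Finset.range (S.bnd f),
        ((-1:ℚ))^r • (S.θZ (n+(r:ℤ)+(s:ℤ)+1)
          * (S.h t * S.perp (S.e r) (S.Dθ (s+t+1) f))) := by rw [hW]
    have hVs : (∑ r ∈ Finset.range R, ∑ t ∈ Finset.range (S.bnd f),
        ((-1:ℚ))^r • (S.θZ (n+(r:ℤ)+(s:ℤ)+1) *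
          (if 1 ≤ r ∧ 1 ≤ t then S.h (t-1) * S.perp (S.e (r-1)) (S.Dθ (s+t+1) f) else 0)))
        = - W (s+1) := by
      rw [sum_shift1 R _ (by
        apply Finset.sum_eq_zero
        intro t _
        rw [if_neg (by omega), mul_zero, smul_zero])]
      have hinner : ∀ r ∈ Finset.range (R-1),
          (∑ t ∈ Finset.range (S.bnd f), ((-1:ℚ))^(r+1) • (S.θZ (n+((r+1:ℕ):ℤ)+(s:ℤ)+1) *
            (if 1 ≤ r+1 ∧ 1 ≤ t then S.h (t-1) * S.perp (S.e (r+1-1)) (S.Dθ (s+t+1) f) else 0)))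
          = ∑ t ∈ Finset.range (S.bnd f),
              -(((-1:ℚ))^r • (S.θZ (n+(r:ℤ)+((s+1:ℕ):ℤ)+1)
                * (S.h t * S.perp (S.e r) (S.Dθ ((s+1)+t+1) f)))) := by
        intro r _
        rw [sum_shift1 (S.bnd f) _ (by rw [if_neg (by omega), mul_zero, smul_zero])]
        have hterm2 : ∀ t ∈ Finset.range (S.bnd f - 1),
            ((-1:ℚ))^(r+1) • (S.θZ (n+((r+1:ℕ):ℤ)+(s:ℤ)+1) *
              (if 1 ≤ r+1 ∧ 1 ≤ t+1 then S.h (t+1-1) * S.perp (S.e (r+1-1)) (S.Dθ (s+(t+1)+1) f) else 0))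
            = -(((-1:ℚ))^r • (S.θZ (n+(r:ℤ)+((s+1:ℕ):ℤ)+1)
                * (S.h t * S.perp (S.e r) (S.Dθ ((s+1)+t+1) f)))) := by
          intro t _
          rw [if_pos ⟨by omega, by omega⟩]
          have e1 : t+1-1 = t := by omega
          have e2 : r+1-1 = r := by omega
          have e3 : s+(t+1)+1 = (s+1)+t+1 := by omega
          have e4 : (n+((r+1:ℕ):ℤ)+(s:ℤ)+1) = (n+(r:ℤ)+((s+1:ℕ):ℤ)+1) := by push_cast; ring
          rw [e1, e2, e3, e4, pow_succ, mul_comm, mul_smul, neg_one_smul]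
        rw [Finset.sum_congr rfl hterm2]
        exact (sum_ext_zero (fun (t : ℕ) => -(((-1:ℚ))^r •
          (S.θZ (n+(r:ℤ)+((s+1:ℕ):ℤ)+1)
            * (S.h t * S.perp (S.e r) (S.Dθ ((s+1)+t+1) f)))))
          (S.bnd f - 1) (S.bnd f) (by omega) (fun t ht => by
            simp only [S.bnd_Dθ f ((s+1)+t+1) (by omega), map_zero, mul_zero,
              smul_zero, neg_zero])).symm
      rw [Finset.sum_congr rfl hinner]
      have hout : ∀ r : ℕ, (∑ t ∈ Finset.range (S.bnd f),
          -(((-1:ℚ))^r • (S.θZ (n+(r:ℤ)+((s+1:ℕ):ℤ)+1)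
            * (S.h t * S.perp (S.e r) (S.Dθ ((s+1)+t+1) f)))))
          = -(∑ t ∈ Finset.range (S.bnd f),
              ((-1:ℚ))^r • (S.θZ (n+(r:ℤ)+((s+1:ℕ):ℤ)+1)
                * (S.h t * S.perp (S.e r) (S.Dθ ((s+1)+t+1) f)))) := by
        intro r
        rw [Finset.sum_neg_distrib]
      rw [Finset.sum_congr rfl (fun r _ => hout r)]
      rw [Finset.sum_neg_distrib]
      congr 1
      rw [← sum_ext_zero (fun (r : ℕ) => ∑ t ∈ Finset.range (S.bnd f),
          ((-1:ℚ))^r • (S.θZ (n+(r:ℤ)+((s+1:ℕ):ℤ)+1)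
            * (S.h t * S.perp (S.e r) (S.Dθ ((s+1)+t+1) f)))) (R-1) R (by omega)
          (fun r hr => by
            apply Finset.sum_eq_zero
            intro t ht
            have htB : t < S.bnd f := Finset.mem_range.mp ht
            have hbd : S.bnd (S.Dθ ((s+1)+t+1) f) ≤ r := by
              have h2 := hRDθ ((s+1)+t+1) (by omega)
              omega
            rw [S.bnd_eperp _ r hbd, mul_zero, mul_zero, smul_zero])]
    rw [hVs, ← hUs, ← sub_eq_add_neg]
  rw [Finset.sum_congr rfl stepA, Finset.sum_range_sub' W (S.bnd f), hWB, sub_zero]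
  -- now show RHS equals W 0
  rw [← sum_ext_zero (fun (r : ℕ) => ((-1 : ℚ))^r •
      (S.θZ (n + (r : ℤ) + 1) * S.de 0 (S.perp (S.e r) f))) (S.bnd f) R hRB
      (fun r hr => by simp only [S.bnd_eperp f r hr, S.de_zero, mul_zero, smul_zero])]
  rw [hW]
  apply Finset.sum_congr rfl
  intro r _
  have hder : S.de 0 (S.perp (S.e r) f)
      = ∑ t ∈ Finset.range (S.bnd f), S.h t * S.perp (S.e r) (S.Dθ (t+1) f) := by
    rw [S.de_ext 0 (S.perp (S.e r) f)
      (le_max_right (S.bnd f) (S.bnd (S.perp (S.e r) f))), pow_zero, one_smul]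
    have h1 : ∀ t ∈ Finset.range (max (S.bnd f) (S.bnd (S.perp (S.e r) f))),
        S.h t * S.Dθ (0+t+1) (S.perp (S.e r) f)
          = S.h t * S.perp (S.e r) (S.Dθ (t+1) f) := by
      intro t _
      rw [show 0+t+1 = t+1 from by omega, S.Dθ_eperp (show 1 ≤ t+1 by omega) r f]
    rw [Finset.sum_congr rfl h1]
    exact sum_ext_zero _ (S.bnd f) _ (le_max_left _ _) (fun t ht => by
      rw [S.bnd_Dθ f _ (by omega), map_zero, mul_zero])
  rw [hder, Finset.mul_sum, Finset.smul_sum]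
  apply Finset.sum_congr rfl
  intro t _
  have e1 : (0:ℕ)+t+1 = t+1 := by omega
  have e2 : (n+(r:ℤ)+((0:ℕ):ℤ)+1) = (n+(r:ℤ)+1) := by push_cast; ring
  rw [e1, e2]

end SSF

/-- For every `n ∈ ℤ`,
`∑_{r,s≥0} (−1)^{r+s} θ_{n+r+s+1} ∘ e_r^⊥ ∘ ∂_{ẽ_s}
  = ∑_{r≥0} (−1)^r θ_{n+r+1} ∘ ∂_{ẽ₀} ∘ e_r^⊥`,
and consequently the even type-I Bernstein operator
`B_n^{(0)} = ∂_{ẽ₀} ∘ B_n^{(1)}` equals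
`∑_{r≥0} (−1)^r h_{n+r} ∘ e_r^⊥ − ∑_{r,s≥0} (−1)^{r+s} θ_{n+r+s+1} ∘ e_r^⊥ ∘ ∂_{ẽ_s}`
(all sums are locally finite and rendered with the truncation bound `bnd`). -/
theorem B0_explicit {A : Type*} [Ring A] [Algebra ℚ A]
    (S : SSF A) (n : ℤ) (f : A) :
    (∑ s ∈ Finset.range (S.bnd f), ∑ r ∈ Finset.range (S.bnd (S.de s f)),
        ((-1 : ℚ))^(r+s) • (S.θZ (n + (r : ℤ) + (s : ℤ) + 1) * S.ePerp r (S.de s f)))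
      = (∑ r ∈ Finset.range (S.bnd f),
          ((-1 : ℚ))^r • (S.θZ (n + (r : ℤ) + 1) * S.de 0 (S.ePerp r f)))
    ∧ S.B0 n f
      = (∑ r ∈ Finset.range (S.bnd f),
          ((-1 : ℚ))^r • (S.hZ (n + (r : ℤ)) * S.ePerp r f))
        - (∑ s ∈ Finset.range (S.bnd f), ∑ r ∈ Finset.range (S.bnd (S.de s f)),
            ((-1 : ℚ))^(r+s) • (S.θZ (n + (r : ℤ) + (s : ℤ) + 1) * S.ePerp r (S.de s f))) := by
  classical
  refine ⟨S.claim1 n f, ?_⟩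
  rw [S.claim1 n f]
  simp only [SSF.ePerp]
  set c : ℕ → A := fun r => ((-1:ℚ))^r • (S.θZ (n+(r:ℤ)+1) * S.perp (S.e r) f) with hc
  have hB1 : S.B1 n f = ∑ r ∈ Finset.range (S.bnd f), c r := by
    rw [hc]
    simp only [SSF.B1, SSF.ePerp]
  set M := S.bnd (S.B1 n f)
      + (Finset.range (S.bnd f)).sup (fun r => S.bnd (S.perp (S.e r) f))
      + (n.toNat + S.bnd f + 1) with hMdef
  have hM2a : S.bnd (S.B1 n f) ≤ M := by omega
  have hMg : ∀ r, r < S.bnd f → S.bnd (S.perp (S.e r) f) ≤ M := by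
    intro r hr
    have h1 : S.bnd (S.perp (S.e r) f)
        ≤ (Finset.range (S.bnd f)).sup (fun r => S.bnd (S.perp (S.e r) f)) :=
      Finset.le_sup (f := fun r => S.bnd (S.perp (S.e r) f)) (Finset.mem_range.mpr hr)
    omega
  simp only [SSF.B0]
  rw [S.de_ext 0 (S.B1 n f) hM2a, pow_zero, one_smul]
  have hstep : ∀ u ∈ Finset.range M,
      S.h u * S.Dθ (0+u+1) (S.B1 n f)
        = ∑ r ∈ Finset.range (S.bnd f), S.h u * S.Dθ (u+1) (c r) := by
    intro u _
    rw [show (0:ℕ)+u+1 = u+1 from by omega, hB1, map_sum, Finset.mul_sum]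
  rw [Finset.sum_congr rfl hstep, Finset.sum_comm]
  have hper : ∀ r ∈ Finset.range (S.bnd f),
      (∑ u ∈ Finset.range M, S.h u * S.Dθ (u+1) (c r))
        = ((-1:ℚ))^r • (S.hZ (n+(r:ℤ)) * S.perp (S.e r) f)
          - ((-1:ℚ))^r • (S.θZ (n+(r:ℤ)+1) * S.de 0 (S.perp (S.e r) f)) := by
    intro r hr
    have hrB : r < S.bnd f := Finset.mem_range.mp hr
    have hg : S.bnd (S.perp (S.e r) f) ≤ M := hMg r hrB
    have hcr : ∀ u : ℕ, S.h u * S.Dθ (u+1) (c r)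
        = ((-1:ℚ))^r • (S.h u * S.Dθ (u+1) (S.θZ (n+(r:ℤ)+1) * S.perp (S.e r) f)) := by
      intro u
      rw [hc]
      simp only
      rw [map_smul, mul_smul_comm]
    rw [Finset.sum_congr rfl (fun u _ => hcr u), ← Finset.smul_sum]
    by_cases hpos : 1 ≤ n + (r:ℤ) + 1
    · set k := (n+(r:ℤ)+1).toNat with hk
      have hk1 : 1 ≤ k := by omega
      have hθk : S.θZ (n+(r:ℤ)+1) = S.θ k := by rw [SSF.θZ, if_pos hpos]
      rw [hθk]
      have hsplit : ∀ u ∈ Finset.range M,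
          S.h u * S.Dθ (u+1) (S.θ k * S.perp (S.e r) f)
            = S.h u * ((if k = u+1 then (1:A) else 0) * S.perp (S.e r) f)
              - S.θ k * (S.h u * S.Dθ (u+1) (S.perp (S.e r) f)) := by
        intro u _
        rw [S.Dθ_leibniz, S.Dθ_θ (u+1) k (by omega), S.σ_θ, neg_mul, mul_add, mul_neg,
          ← sub_eq_add_neg]
        congr 1
        rw [← mul_assoc, S.h_comm u (S.θ k), mul_assoc]
      rw [Finset.sum_congr rfl hsplit, Finset.sum_sub_distrib]
      have hfirst : ∑ u ∈ Finset.range M,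
          S.h u * ((if k = u+1 then (1:A) else 0) * S.perp (S.e r) f)
            = S.hZ (n+(r:ℤ)) * S.perp (S.e r) f := by
        rw [Finset.sum_eq_single (k-1)]
        · rw [if_pos (by omega), one_mul]
          congr 1
          rw [SSF.hZ, if_pos (by omega)]
          congr 1
          omega
        · intro u _ hu
          rw [if_neg (by omega), zero_mul, mul_zero]
        · intro hnot
          exfalso
          apply hnot
          apply Finset.mem_range.mpr
          have h2 : (n+(r:ℤ)).toNat ≤ n.toNat + r := by omega
          omega
      have hsecond : ∑ u ∈ Finset.range M,
          S.θ k * (S.h u * S.Dθ (u+1) (S.perp (S.e r) f))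
            = S.θ k * S.de 0 (S.perp (S.e r) f) := by
        rw [← Finset.mul_sum]
        congr 1
        rw [S.de_ext 0 (S.perp (S.e r) f) hg, pow_zero, one_smul]
        exact Finset.sum_congr rfl (fun u _ => by
          rw [show (0:ℕ)+u+1 = u+1 from by omega])
      rw [hfirst, hsecond, smul_sub]
    · have hθ0 : S.θZ (n+(r:ℤ)+1) = 0 := by rw [SSF.θZ, if_neg hpos]
      have hh0 : S.hZ (n+(r:ℤ)) = 0 := by rw [SSF.hZ, if_neg (by omega)]
      rw [hθ0, hh0]
      simp
  rw [Finset.sum_congr rfl hper, Finset.sum_sub_distrib]
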